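/- Let F: X ⇉ Y be a set-valued mapping between locally convex topological vector spaces whose graph is convex. Then qri(gph F) ⊇ {(x, y) ∈ X × Y | x ∈ qri(dom F) and y ∈ int(F(x))}. -/

import Mathlib

open Set Pointwise Filter Topology

/-- The cone generated by a set `A`: `{t • a | t ≥ 0, a ∈ A}`. -/
def coneGen {X : Type*} [AddCommGroup X] [Module ℝ X] (A : Set X) : Set X :=
  {y | ∃ t : ℝ, 0 ≤ t ∧ ∃ a ∈ A, y = t • a}

/-- A set is a linear subspace if it is the carrier of a submodule. -/
def IsLinSubspace {X : Type*} [AddCommGroup X] [Module ℝ X] (s : Set X) : Prop :=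
  ∃ L : Submodule ℝ X, (L : Set X) = s

/-- Intrinsic relative interior. -/
def iri {X : Type*} [AddCommGroup X] [Module ℝ X] (Ω : Set X) : Set X :=
  {x ∈ Ω | IsLinSubspace (coneGen ((fun y => y - x) '' Ω))}

/-- Quasi-relative interior. -/
def qri {X : Type*} [AddCommGroup X] [Module ℝ X] [TopologicalSpace X] (Ω : Set X) : Set X :=
  {x ∈ Ω | IsLinSubspace (closure (coneGen ((fun y => y - x) '' Ω)))}

/-- Relative interior in a topological vector space. -/
def ri {X : Type*} [AddCommGroup X] [Module ℝ X] [TopologicalSpace X] (Ω : Set X) : Set X :=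
  {x ∈ Ω | ∃ V ∈ nhds x, V ∩ closure ((affineSpan ℝ Ω : Set X)) ⊆ Ω}

/-- Normal cone (functional-analytic version), a subset of the topological dual. -/
def normalCone {X : Type*} [AddCommGroup X] [Module ℝ X] [TopologicalSpace X]
    (Ω : Set X) (xb : X) : Set (X →L[ℝ] ℝ) :=
  {f | ∀ x ∈ Ω, f (x - xb) ≤ 0}

/-- The graph of a set-valued mapping. -/
def gph {X Y : Type*} (F : X → Set Y) : Set (X × Y) := {p | p.2 ∈ F p.1}

/-- The domain of a set-valued mapping. -/
def domF {X Y : Type*} (F : X → Set Y) : Set X := {x | (F x).Nonempty}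

lemma coneGen_add {X : Type*} [AddCommGroup X] [Module ℝ X] {A : Set X}
    (hA : Convex ℝ A) {a b : X} (ha : a ∈ coneGen A) (hb : b ∈ coneGen A) :
    a + b ∈ coneGen A := by
  obtain ⟨s, hs, p, hp, rfl⟩ := ha
  obtain ⟨t, ht, q, hq, rfl⟩ := hb
  rcases eq_or_lt_of_le (add_nonneg hs ht) with h | h
  · have hs0 : s = 0 := by linarith
    have ht0 : t = 0 := by linarith
    exact ⟨0, le_refl 0, p, hp, by simp [hs0, ht0]⟩
  · refine ⟨s + t, h.le, (s/(s+t)) • p + (t/(s+t)) • q,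
      hA hp hq (div_nonneg hs h.le) (div_nonneg ht h.le) (by field_simp), ?_⟩
    rw [smul_add, smul_smul, smul_smul]
    field_simp

/-- for a convex set-valued mapping `F` between LCTV spaces,
`qri (gph F)` contains all `(x, y)` with `x ∈ qri (dom F)` and `y ∈ int (F x)`. -/
theorem qri_gph_superset {X Y : Type*} [AddCommGroup X] [Module ℝ X]
    [TopologicalSpace X] [IsTopologicalAddGroup X] [ContinuousSMul ℝ X]
    [LocallyConvexSpace ℝ X]
    [AddCommGroup Y] [Module ℝ Y]
    [TopologicalSpace Y] [IsTopologicalAddGroup Y] [ContinuousSMul ℝ Y]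
    [LocallyConvexSpace ℝ Y]
    (F : X → Set Y) (hconv : Convex ℝ (gph F)) :
    {p : X × Y | p.1 ∈ qri (domF F) ∧ p.2 ∈ interior (F p.1)} ⊆ qri (gph F) := by
  rintro ⟨x, y⟩ ⟨⟨hxdom, L, hL⟩, hy⟩
  have hyF : y ∈ F x := interior_subset hy
  have hAconv : Convex ℝ ((fun p => p - ((x : X), (y : Y))) '' gph F) := by
    simp only [sub_eq_neg_add]
    exact hconv.translate _
  set K := coneGen ((fun u => u - x) '' domF F) with hKdef
  set C := coneGen ((fun p => p - ((x : X), (y : Y))) '' gph F) with hCdef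
  refine ⟨hyF, L.prod ⊤, ?_⟩
  -- C ⊆ closure K ×ˢ univ
  have h1 : C ⊆ (closure K) ×ˢ (univ : Set Y) := by
    rintro _ ⟨t, ht, _, ⟨⟨u, v⟩, huv, rfl⟩, rfl⟩
    refine ⟨subset_closure ⟨t, ht, u - x, ⟨u, ⟨v, huv⟩, rfl⟩, by simp⟩, trivial⟩
  -- {0} × univ ⊆ C
  have h0 : ∀ z : Y, ((0 : X), z) ∈ C := by
    intro z
    have hcont : Tendsto (fun t : ℝ => y + t • z) (𝓝 0) (𝓝 y) := by
      have ht : Tendsto (fun t : ℝ => t • z) (𝓝 0) (𝓝 ((0 : ℝ) • z)) :=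
        (continuous_id.smul continuous_const).tendsto (0 : ℝ)
      simpa using tendsto_const_nhds.add ht
    have hev : ∀ᶠ t in 𝓝 (0 : ℝ), y + t • z ∈ F x :=
      hcont.eventually_mem (mem_interior_iff_mem_nhds.mp hy)
    obtain ⟨t, htF, ht0⟩ :=
      ((hev.filter_mono nhdsWithin_le_nhds).and
        (eventually_mem_nhdsWithin (s := Ioi (0 : ℝ)) (a := 0))).exists
    have htpos : (0 : ℝ) < t := ht0
    refine ⟨t⁻¹, (inv_pos.mpr htpos).le, ((x, y + t • z) - (x, y)),
      ⟨(x, y + t • z), htF, rfl⟩, ?_⟩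
    simp [Prod.ext_iff, smul_smul, inv_mul_cancel₀ htpos.ne']
  -- K ×ˢ univ ⊆ C
  have h2 : K ×ˢ (univ : Set Y) ⊆ C := by
    rintro ⟨w, z⟩ ⟨⟨t, ht, _, ⟨u, hu, rfl⟩, hw⟩, -⟩
    obtain ⟨v, hv⟩ := hu
    have hw' : w = t • (u - x) := hw
    have hc1 : (w, t • (v - y)) ∈ C :=
      ⟨t, ht, ((u, v) - (x, y)), ⟨(u, v), hv, rfl⟩, by simp [hw', Prod.ext_iff]⟩
    have hc2 : ((0 : X), z - t • (v - y)) ∈ C := h0 _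
    have := coneGen_add hAconv hc1 hc2
    simpa using this
  have heq : ((L.prod (⊤ : Submodule ℝ Y)) : Set (X × Y)) = closure C := by
    have hcoe : ((L.prod (⊤ : Submodule ℝ Y)) : Set (X × Y)) =
        (L : Set X) ×ˢ (univ : Set Y) := by
      ext p; simp [Submodule.mem_prod, Set.mem_prod]
    rw [hcoe, hL]
    apply le_antisymm
    · calc closure K ×ˢ (univ : Set Y) = closure (K ×ˢ (univ : Set Y)) := by
            rw [closure_prod_eq, closure_univ]
        _ ⊆ closure C := closure_mono h2
    · exact closure_minimal h1 (isClosed_closure.prod isClosed_univ)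
  exact heq
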